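/- For a Fuchsian system on ℙ¹ with potential Φ(x) = ∑ⱼ Φⱼ/(x−zⱼ) and ∑ⱼ Φⱼ = 0, Schlesinger's equations imply that the one-forms H_j dz_j with H_j := ∑_{k≠j} Tr(Φⱼ Φₖ)/(zⱼ−zₖ) satisfy the closedness (symmetry) condition ∂_{z_i} H_j = ∂_{z_j} H_i for i ≠ j, so that ∑ⱼ H_j dz_j is a closed 1-form (log of the isomonodromic tau-function). -/

import Mathlib

attribute [local instance] Matrix.linftyOpNormedAddCommGroup Matrix.linftyOpNormedRing
  Matrix.linftyOpNormedAlgebra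


section helpers

variable {n : ℕ}

lemma tr_cyc (X Y Z : Matrix (Fin n) (Fin n) ℂ) :
    (X * (Y * Z)).trace = (Z * (X * Y)).trace := by
  rw [← Matrix.mul_assoc, ← Matrix.mul_assoc, Matrix.trace_mul_cycle]

lemma tzeroA (A B : Matrix (Fin n) (Fin n) ℂ) : ((A * B - B * A) * A).trace = 0 := by
  rw [sub_mul, Matrix.trace_sub, Matrix.mul_assoc, Matrix.mul_assoc, tr_cyc B A A, sub_self]

lemma tzeroB (A B : Matrix (Fin n) (Fin n) ℂ) : (B * (B * A - A * B)).trace = 0 := by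
  rw [mul_sub, Matrix.trace_sub, tr_cyc B A B, sub_self]

lemma perk (A B C : Matrix (Fin n) (Fin n) ℂ) (a b c : ℂ)
    (hba : b - a ≠ 0) (hab : a - b ≠ 0) (hbc : b - c ≠ 0) (hcb : c - b ≠ 0)
    (hac : a - c ≠ 0) (hca : c - a ≠ 0) :
    (b - c)⁻¹ * (B * ((c - a)⁻¹ • (A * C - C * A)) + ((b - a)⁻¹ • (A * B - B * A)) * C).trace
        - (b - a)⁻¹ * ((a - c)⁻¹ * (B * (C * A - A * C)).trace)
      = (a - c)⁻¹ * (A * ((c - b)⁻¹ • (B * C - C * B)) + ((a - b)⁻¹ • (B * A - A * B)) * C).trace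
        - (a - b)⁻¹ * ((b - c)⁻¹ * (A * (C * B - B * C)).trace) := by
  simp only [mul_smul_comm, smul_mul_assoc, Matrix.trace_add, Matrix.trace_smul, smul_eq_mul,
    mul_sub, sub_mul, Matrix.trace_sub, Matrix.mul_assoc]
  rw [tr_cyc B C A, tr_cyc A C B]
  generalize (A * (B * C)).trace = u
  generalize (B * (A * C)).trace = v
  field_simp
  ring

end helpers

noncomputable def trCLM (n : ℕ) : Matrix (Fin n) (Fin n) ℂ →L[ℂ] ℂ :=
  LinearMap.toContinuousLinearMap (Matrix.traceLinearMap (Fin n) ℂ ℂ)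

@[simp] lemma trCLM_apply {n : ℕ} (A : Matrix (Fin n) (Fin n) ℂ) : trCLM n A = A.trace := rfl

lemma key_fderiv {M n : ℕ} (Φ : Fin M → (Fin M → ℂ) → Matrix (Fin n) (Fin n) ℂ)
    (z : Fin M → ℂ) (hΦ : ∀ a, DifferentiableAt ℂ (Φ a) z)
    (hz : ∀ a b : Fin M, a ≠ b → z a ≠ z b) (j : Fin M) (v : Fin M → ℂ) :
    fderiv ℂ (fun z => ∑ k ∈ Finset.univ.erase j, (z j - z k)⁻¹ * (Φ j z * Φ k z).trace) z v
      = ∑ k ∈ Finset.univ.erase j,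
          ((z j - z k)⁻¹ * (Φ j z * (fderiv ℂ (Φ k) z v) + (fderiv ℂ (Φ j) z v) * Φ k z).trace
            + (Φ j z * Φ k z).trace * ((v j - v k) * (-((z j - z k) ^ 2)⁻¹))) := by
  have hw : ∀ k ∈ Finset.univ.erase j, z j - z k ≠ 0 := by
    intro k hk
    exact sub_ne_zero.2 (hz j k (Finset.ne_of_mem_erase hk).symm)
  have hsum : HasFDerivAt
      (fun z : Fin M → ℂ => ∑ k ∈ Finset.univ.erase j, (z j - z k)⁻¹ * (Φ j z * Φ k z).trace)
      (∑ k ∈ Finset.univ.erase j,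
        ((z j - z k)⁻¹ • ((trCLM n).comp
            (Φ j z • fderiv ℂ (Φ k) z + (fderiv ℂ (Φ j) z).smulRight (Φ k z)))
          + (Φ j z * Φ k z).trace •
            ((ContinuousLinearMap.smulRight (1 : ℂ →L[ℂ] ℂ) (-((z j - z k) ^ 2)⁻¹) : ℂ →L[ℂ] ℂ).comp
              ((ContinuousLinearMap.proj j : (Fin M → ℂ) →L[ℂ] ℂ) - ContinuousLinearMap.proj k)))) z := by
    apply HasFDerivAt.fun_sum
    intro k hk
    have h1 : HasFDerivAt (fun z : Fin M → ℂ => z j - z k)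
        ((ContinuousLinearMap.proj j : (Fin M → ℂ) →L[ℂ] ℂ) - ContinuousLinearMap.proj k) z :=
      ((ContinuousLinearMap.proj j : (Fin M → ℂ) →L[ℂ] ℂ).hasFDerivAt).sub
        ((ContinuousLinearMap.proj k : (Fin M → ℂ) →L[ℂ] ℂ).hasFDerivAt)
    have hinv : HasFDerivAt (fun z : Fin M → ℂ => (z j - z k)⁻¹)
        ((ContinuousLinearMap.smulRight (1 : ℂ →L[ℂ] ℂ) (-((z j - z k) ^ 2)⁻¹) : ℂ →L[ℂ] ℂ).comp
          ((ContinuousLinearMap.proj j : (Fin M → ℂ) →L[ℂ] ℂ) - ContinuousLinearMap.proj k)) z :=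
      (hasFDerivAt_inv (hw k hk)).comp z h1
    have htr : HasFDerivAt (fun z : Fin M → ℂ => (Φ j z * Φ k z).trace)
        ((trCLM n).comp
          (Φ j z • fderiv ℂ (Φ k) z + (fderiv ℂ (Φ j) z).smulRight (Φ k z))) z :=
      (trCLM n).hasFDerivAt.comp z ((hΦ j).hasFDerivAt.mul' (hΦ k).hasFDerivAt)
    exact hinv.mul htr
  rw [hsum.fderiv]
  rw [ContinuousLinearMap.sum_apply]
  refine Finset.sum_congr rfl fun k hk => ?_
  simp [smul_eq_mul, mul_comm]
  ring


/-- For a Fuchsian system on `ℙ¹`, Schlesinger's equations imply that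
the Hamiltonians `H_j = ∑_{k≠j} Tr(Φ_j Φ_k)/(z_j−z_k)` satisfy the closedness
(symmetry) condition `∂_{z_i} H_j = ∂_{z_j} H_i` for `i ≠ j`, so that `∑_j H_j dz_j`
is a closed 1-form (the log of the isomonodromic tau-function). Partial derivatives
are expressed as `fderiv` applied to the coordinate direction `Pi.single i 1`. -/
theorem schlesinger_hamiltonians_closed
    {M n : ℕ}
    (Φ : Fin M → (Fin M → ℂ) → Matrix (Fin n) (Fin n) ℂ)
    (U : Set (Fin M → ℂ)) (hU : IsOpen U)
    (hdist : ∀ z ∈ U, ∀ i j : Fin M, i ≠ j → z i ≠ z j)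
    (hdiff : ∀ j, DifferentiableOn ℂ (Φ j) U)
    -- Schlesinger's equations: ∂_{z_i}Φ_j = [Φ_i, Φ_j]/(z_j − z_i) for i ≠ j
    (hSch₁ : ∀ z ∈ U, ∀ i j : Fin M, i ≠ j →
      fderiv ℂ (Φ j) z (Pi.single i 1)
        = (z j - z i)⁻¹ • (Φ i z * Φ j z - Φ j z * Φ i z))
    -- and ∂_{z_j}Φ_j = −∑_{k≠j} [Φ_k, Φ_j]/(z_j − z_k)
    (hSch₂ : ∀ z ∈ U, ∀ j : Fin M,
      fderiv ℂ (Φ j) z (Pi.single j 1)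
        = -∑ k ∈ Finset.univ.erase j,
            (z j - z k)⁻¹ • (Φ k z * Φ j z - Φ j z * Φ k z))
    (H : Fin M → (Fin M → ℂ) → ℂ)
    (hH : ∀ j z, H j z
      = ∑ k ∈ Finset.univ.erase j, (z j - z k)⁻¹ * (Φ j z * Φ k z).trace) :
    ∀ z ∈ U, ∀ i j : Fin M, i ≠ j →
      fderiv ℂ (H j) z (Pi.single i 1) = fderiv ℂ (H i) z (Pi.single j 1) := by
  intro z hz i j hij
  have hΦ' : ∀ a, DifferentiableAt ℂ (Φ a) z :=
    fun a => (hdiff a).differentiableAt (hU.mem_nhds hz)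
  have hzz : ∀ a b : Fin M, a ≠ b → z a ≠ z b := fun a b h => hdist z hz a b h
  have hsub : ∀ a b : Fin M, a ≠ b → z a - z b ≠ 0 := fun a b h => sub_ne_zero.2 (hzz a b h)
  have hkey : ∀ a b : Fin M, fderiv ℂ (H b) z (Pi.single a 1)
      = ∑ k ∈ Finset.univ.erase b,
          ((z b - z k)⁻¹ * (Φ b z * (fderiv ℂ (Φ k) z (Pi.single a 1))
              + (fderiv ℂ (Φ b) z (Pi.single a 1)) * Φ k z).trace
            + (Φ b z * Φ k z).trace
              * (((Pi.single a (1:ℂ) : Fin M → ℂ) b - (Pi.single a (1:ℂ) : Fin M → ℂ) k) * (-((z b - z k) ^ 2)⁻¹))) := by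
    intro a b
    have hHb : H b = fun z => ∑ k ∈ Finset.univ.erase b, (z b - z k)⁻¹ * (Φ b z * Φ k z).trace :=
      funext (hH b)
    rw [hHb, key_fderiv Φ z hΦ' hzz b (Pi.single a 1)]
  -- canonical form of the partial derivative
  have main : ∀ a b : Fin M, a ≠ b →
      fderiv ℂ (H b) z (Pi.single a 1)
        = ((z b - z a) ^ 2)⁻¹ * (Φ b z * Φ a z).trace
          + ∑ k ∈ (Finset.univ.erase b).erase a,
              ((z b - z k)⁻¹ * (Φ b z * ((z k - z a)⁻¹ • (Φ a z * Φ k z - Φ k z * Φ a z))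
                  + ((z b - z a)⁻¹ • (Φ a z * Φ b z - Φ b z * Φ a z)) * Φ k z).trace
                - (z b - z a)⁻¹
                  * ((z a - z k)⁻¹ * (Φ b z * (Φ k z * Φ a z - Φ a z * Φ k z)).trace)) := by
    intro a b hab
    rw [hkey a b]
    have hmem : a ∈ Finset.univ.erase b := Finset.mem_erase.2 ⟨hab, Finset.mem_univ a⟩
    rw [← Finset.sum_erase_add _ _ hmem]
    have h1 : ∀ k ∈ (Finset.univ.erase b).erase a,
        ((z b - z k)⁻¹ * (Φ b z * (fderiv ℂ (Φ k) z (Pi.single a 1))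
            + (fderiv ℂ (Φ b) z (Pi.single a 1)) * Φ k z).trace
          + (Φ b z * Φ k z).trace
            * (((Pi.single a (1:ℂ) : Fin M → ℂ) b - (Pi.single a (1:ℂ) : Fin M → ℂ) k) * (-((z b - z k) ^ 2)⁻¹)))
        = (z b - z k)⁻¹ * (Φ b z * ((z k - z a)⁻¹ • (Φ a z * Φ k z - Φ k z * Φ a z))
            + ((z b - z a)⁻¹ • (Φ a z * Φ b z - Φ b z * Φ a z)) * Φ k z).trace := by
      intro k hk
      have hka : k ≠ a := Finset.ne_of_mem_erase hk
      rw [hSch₁ z hz a k hka.symm, hSch₁ z hz a b hab,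
        Pi.single_eq_of_ne hab.symm, Pi.single_eq_of_ne hka]
      ring
    rw [Finset.sum_congr rfl h1]
    -- now handle the term at k = a
    rw [hSch₁ z hz a b hab, hSch₂ z hz a, Pi.single_eq_of_ne hab.symm, Pi.single_eq_same]
    have h2 : (Φ b z * -∑ m ∈ Finset.univ.erase a,
          (z a - z m)⁻¹ • (Φ m z * Φ a z - Φ a z * Φ m z)
        + ((z b - z a)⁻¹ • (Φ a z * Φ b z - Φ b z * Φ a z)) * Φ a z).trace
        = -∑ m ∈ Finset.univ.erase a,
            (z a - z m)⁻¹ * (Φ b z * (Φ m z * Φ a z - Φ a z * Φ m z)).trace := by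
      rw [Matrix.trace_add, smul_mul_assoc, Matrix.trace_smul, tzeroA, smul_zero, add_zero,
        mul_neg, Finset.mul_sum, Matrix.trace_neg, Matrix.trace_sum]
      congr 1
      refine Finset.sum_congr rfl fun m hm => ?_
      rw [mul_smul_comm, Matrix.trace_smul, smul_eq_mul]
    rw [h2]
    have hbmem : b ∈ Finset.univ.erase a := Finset.mem_erase.2 ⟨hab.symm, Finset.mem_univ b⟩
    rw [← Finset.sum_erase_add _ _ hbmem, tzeroB, mul_zero, add_zero,
      Finset.erase_right_comm]
    rw [Finset.sum_sub_distrib, mul_neg, Finset.mul_sum]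
    ring
  rw [main i j hij, main j i hij.symm]
  have hsq : (z i - z j) ^ 2 = (z j - z i) ^ 2 := by ring
  rw [hsq, Matrix.trace_mul_comm (Φ i z) (Φ j z), Finset.erase_right_comm]
  congr 1
  refine Finset.sum_congr rfl fun k hk => ?_
  have hki : k ≠ i := (Finset.mem_erase.1 (Finset.mem_of_mem_erase hk)).1
  have hkj : k ≠ j := Finset.ne_of_mem_erase hk
  exact perk (Φ i z) (Φ j z) (Φ k z) (z i) (z j) (z k)
    (hsub j i hij.symm) (hsub i j hij) (hsub j k hkj.symm) (hsub k j hkj)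
    (hsub i k hki.symm) (hsub k i hki)
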